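/- arXiv:1006.4400 — 2 statements merged into one kernel-verified Lean document; each statement's English description precedes it below -/
import Mathlib

section
/- Let N ≥ 2, δ = 1, k_n = ⌊K n log n⌋, and let the connection rates satisfy c_{k_n} = C + a log n · N^{b log n} with C ≥ 0, a > 0, b > 0 and c_{k_n} ≤ c_j ≤ c_{k_{n+1}} whenever k_n < j < k_{n+1}, where 2/log N < K < b and additionally b < 2K − 1/log N. Then almost surely there exists a (random) number n_0 such that for all n ≥ n_0, edges of G_N between X_{k_n} ∩ (B_{k_n} \ B_{k_{n−1}}) and X_{k_{n+ℓ}} ∩ (B_{k_{n+ℓ}} \ B_{k_{n+ℓ−1}}) occur only for ℓ = 1 or ℓ = 2; that is, the percolation cluster is given by a cascade of clusters at the distances k_n. -/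
open MeasureTheory ProbabilityTheory Filter

/-- The hierarchical group of order `N`: sequences with values in `{0, ..., N-1}`
(encoded as `ZMod N`), all but finitely many entries zero, with componentwise
addition mod `N`. -/
abbrev HierGroup (N : ℕ) := ℕ →₀ ZMod N

/-- The hierarchical distance: `0` if `x = y`, and otherwise the largest index
(counted starting from `1`) where `x` and `y` differ. -/
noncomputable def hdist {N : ℕ} (x y : HierGroup N) : ℕ :=
  (x - y).support.sup fun i => i + 1

lemma hdist_comm {N : ℕ} (x y : HierGroup N) : hdist x y = hdist y x := by
  unfold hdist
  rw [← neg_sub y x, Finsupp.support_neg]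

/-- The random graph determined by an edge configuration `ω`:
`x` and `y` are adjacent iff they are distinct and the edge `s(x,y)` is open. -/
def graphOf {V : Type*} {Ω : Type*} (E : Sym2 V → Ω → Bool) (ω : Ω) : SimpleGraph V where
  Adj x y := x ≠ y ∧ E s(x, y) ω = true
  symm := ⟨by
    intro x y h
    refine ⟨h.1.symm, ?_⟩
    rw [Sym2.eq_swap]
    exact h.2⟩
  loopless := ⟨fun x h => h.1 rfl⟩

/-- `x` lies in an infinite cluster (connected component) of `G`. -/
def InInfiniteCluster {V : Type*} (G : SimpleGraph V) (x : V) : Prop :=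
  {y | G.Reachable x y}.Infinite

/-- `G` has exactly one infinite connected component. -/
def UniqueInfiniteCluster {V : Type*} (G : SimpleGraph V) : Prop :=
  ∃! S : Set V, (∃ x, S = {y | G.Reachable x y}) ∧ S.Infinite

/-- The edge probabilities of the hierarchical random graph `G_N`: two distinct
points at hierarchical distance `k` are joined with probability
`min (c k / N ^ (k * (1 + δ))) 1`. -/
def EdgeProbOK (N : ℕ) (δ : ℝ) (c : ℕ → ℝ) {Ω : Type*} [MeasurableSpace Ω]
    (μ : Measure Ω) (E : Sym2 (HierGroup N) → Ω → Bool) : Prop :=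
  ∀ x y : HierGroup N, x ≠ y →
    μ {ω | E s(x, y) ω = true} =
      ENNReal.ofReal (min (c (hdist x y) / (N : ℝ) ^ ((hdist x y : ℝ) * (1 + δ))) 1)

/-- The `k`-ball containing `0` in the hierarchical group. -/
def hball (N : ℕ) (k : ℕ) : Set (HierGroup N) := {y | hdist 0 y ≤ k}

/-- The `(j, l]`-annulus around `0` in the hierarchical group. -/
def hannulus (N : ℕ) (j l : ℕ) : Set (HierGroup N) :=
  {y | j < hdist 0 y ∧ hdist 0 y ≤ l}

/-- The restriction of a graph to a set `S` of vertices: only edges with both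
endpoints in `S` are kept. -/
def restrictTo {V : Type*} (G : SimpleGraph V) (S : Set V) : SimpleGraph V where
  Adj a b := G.Adj a b ∧ a ∈ S ∧ b ∈ S
  symm := ⟨fun a b h => ⟨h.1.symm, h.2.2, h.2.1⟩⟩
  loopless := ⟨fun a h => G.loopless.irrefl a h.1⟩

/-- The cluster of `x` inside the `k`-ball `B_k` containing `0`, using only
edges between points of `B_k`. -/
def clusterIn (N : ℕ) (G : SimpleGraph (HierGroup N)) (k : ℕ) (x : HierGroup N) :
    Set (HierGroup N) :=
  {y | (restrictTo G (hball N k)).Reachable x y}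

/-- `S` is a largest cluster of the ball `B_k` containing `0` (in the graph `G`
restricted to `B_k`). -/
def IsLargestCluster (N : ℕ) (G : SimpleGraph (HierGroup N)) (k : ℕ)
    (S : Set (HierGroup N)) : Prop :=
  (∃ x ∈ hball N k, S = clusterIn N G k x) ∧
    ∀ x ∈ hball N k, (clusterIn N G k x).ncard ≤ S.ncard

/-- The hierarchical scales `k_n = ⌊K n log n⌋`. -/
noncomputable def kseq (K : ℝ) (n : ℕ) : ℕ := ⌊K * n * Real.log n⌋₊


section AuxLemmas

lemma hdist_zero_eq {N : ℕ} (y : HierGroup N) :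
    hdist 0 y = y.support.sup (fun i => i + 1) := by
  unfold hdist
  rw [zero_sub, Finsupp.support_neg]

lemma hdist_zero_le_iff {N : ℕ} {y : HierGroup N} {k : ℕ} :
    hdist 0 y ≤ k ↔ ∀ i, k ≤ i → y i = 0 := by
  rw [hdist_zero_eq, Finset.sup_le_iff]
  constructor
  · intro h i hi
    by_contra hne
    have := h i (Finsupp.mem_support_iff.2 hne)
    omega
  · intro h i hi
    rw [Finsupp.mem_support_iff] at hi
    by_contra hc
    exact hi (h i (by omega))

lemma hdist_ultra {N : ℕ} {x y : HierGroup N} (h : hdist 0 x < hdist 0 y) :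
    hdist x y = hdist 0 y := by
  rw [hdist_zero_eq x, hdist_zero_eq y] at h
  rw [hdist_zero_eq y]
  unfold hdist
  apply le_antisymm
  · apply Finset.sup_le
    intro i hi
    rw [Finsupp.mem_support_iff, Finsupp.sub_apply, sub_ne_zero] at hi
    rcases eq_or_ne (y i) 0 with hy | hy
    · have hx : x i ≠ 0 := by rw [hy] at hi; exact hi
      calc i + 1 ≤ x.support.sup (fun i => i + 1) :=
            Finset.le_sup (Finsupp.mem_support_iff.2 hx)
        _ ≤ _ := h.le
    · exact Finset.le_sup (f := fun i => i + 1) (Finsupp.mem_support_iff.2 hy)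
  · have hne : y.support.Nonempty := by
      by_contra hc
      rw [Finset.not_nonempty_iff_eq_empty] at hc
      rw [hc] at h
      simp at h
    obtain ⟨j, hj, hsup⟩ := y.support.exists_mem_eq_sup hne (fun i => i + 1)
    have hsup' : y.support.sup (fun i => i + 1) = j + 1 := hsup
    rw [hsup']
    have hxj : x j = 0 := by
      by_contra hc
      have h2 : j + 1 ≤ x.support.sup (fun i => i + 1) :=
        Finset.le_sup (f := fun i => i + 1) (Finsupp.mem_support_iff.2 hc)
      omega
    have : (x - y) j ≠ 0 := by
      rw [Finsupp.sub_apply, hxj, zero_sub, neg_ne_zero]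
      exact Finsupp.mem_support_iff.1 hj
    exact Finset.le_sup (f := fun i => i + 1) (Finsupp.mem_support_iff.2 this)



lemma hball_finite (N : ℕ) [NeZero N] (k : ℕ) : (hball N k).Finite := by
  have φdef : ∃ φ : HierGroup N → (Fin k → ZMod N), φ = fun y i => y i.1 := ⟨_, rfl⟩
  obtain ⟨φ, hφ⟩ := φdef
  apply Set.Finite.of_finite_image (f := φ)
  · exact Set.toFinite _
  · intro y hy z hz hyz
    ext i
    rcases lt_or_ge i k with hik | hik
    · have := congrFun hyz ⟨i, hik⟩
      simpa [hφ] using this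
    · rw [hdist_zero_le_iff.1 hy i hik, hdist_zero_le_iff.1 hz i hik]

lemma hball_ncard (N : ℕ) [NeZero N] (k : ℕ) : (hball N k).ncard ≤ N ^ k := by
  have := Set.ncard_le_ncard_of_injOn
    (fun (y : HierGroup N) (i : Fin k) => y i.1)
    (fun a _ => Set.mem_univ _)
    (by
      intro y hy z hz hyz
      ext i
      rcases lt_or_ge i k with hik | hik
      · exact congrFun hyz ⟨i, hik⟩
      · rw [hdist_zero_le_iff.1 hy i hik, hdist_zero_le_iff.1 hz i hik])
    (Set.finite_univ)
  calc (hball N k).ncard ≤ (Set.univ : Set (Fin k → ZMod N)).ncard := this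
    _ = N ^ k := by
        rw [Set.ncard_univ, Nat.card_eq_fintype_card]
        simp [ZMod.card]

lemma tsum_le_of_support_hball {N : ℕ} [NeZero N] {f : HierGroup N → ENNReal}
    (k : ℕ) (G : ENNReal) (h0 : ∀ y, y ∉ hball N k → f y = 0) (hle : ∀ y, f y ≤ G) :
    ∑' y, f y ≤ (N : ENNReal) ^ k * G := by
  have hfin := hball_finite N k
  rw [tsum_eq_sum (s := hfin.toFinset) (fun b hb => h0 b (by simpa using hb))]
  calc ∑ b ∈ hfin.toFinset, f b ≤ hfin.toFinset.card • G :=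
        Finset.sum_le_card_nsmul _ _ _ (fun x _ => hle x)
    _ = (hfin.toFinset.card : ENNReal) * G := by rw [nsmul_eq_mul]
    _ ≤ (N : ENNReal) ^ k * G := by
        apply mul_le_mul_left
        have : hfin.toFinset.card = (hball N k).ncard := (Set.ncard_eq_toFinset_card _ hfin).symm
        rw [this]
        calc ((hball N k).ncard : ENNReal) ≤ ((N ^ k : ℕ) : ENNReal) := by
              exact_mod_cast Nat.cast_le.2 (hball_ncard N k)
          _ = (N : ENNReal) ^ k := by push_cast; ring


lemma log_natCast_nonneg (n : ℕ) : 0 ≤ Real.log n := by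
  rcases Nat.eq_zero_or_pos n with h | h
  · simp [h]
  · exact Real.log_nonneg (by exact_mod_cast h)

lemma log_natCast_mono {n m : ℕ} (h : n ≤ m) : Real.log n ≤ Real.log m := by
  rcases Nat.eq_zero_or_pos n with h0 | h0
  · simp [h0]; exact log_natCast_nonneg m
  · exact Real.log_le_log (by exact_mod_cast h0) (by exact_mod_cast h)

lemma kseq_mono {K : ℝ} (hK : 0 ≤ K) : Monotone (kseq K) := by
  intro n m h
  apply Nat.floor_mono
  have h1 : (n : ℝ) * Real.log n ≤ (m : ℝ) * Real.log m :=
    mul_le_mul (by exact_mod_cast h) (log_natCast_mono h) (log_natCast_nonneg n)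
      (Nat.cast_nonneg m)
  calc K * n * Real.log n = K * ((n:ℝ) * Real.log n) := by ring
    _ ≤ K * ((m:ℝ) * Real.log m) := by exact mul_le_mul_of_nonneg_left h1 hK
    _ = K * m * Real.log m := by ring

lemma kseq_le {K : ℝ} (hK : 0 ≤ K) (n : ℕ) : (kseq K n : ℝ) ≤ K * n * Real.log n :=
  Nat.floor_le (by positivity <;> skip)

lemma kseq_gt {K : ℝ} (n : ℕ) : K * n * Real.log n - 1 < (kseq K n : ℝ) := by
  have := Nat.lt_floor_add_one (K * n * Real.log n)
  unfold kseq
  linarith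

lemma one_le_log_of_three_le {m : ℕ} (hm : 3 ≤ m) : 1 ≤ Real.log m := by
  rw [Real.le_log_iff_exp_le (by positivity)]
  have h1 : Real.exp 1 < 3 := lt_of_lt_of_le Real.exp_one_lt_d9 (by norm_num)
  have h2 : (3:ℝ) ≤ m := by exact_mod_cast hm
  linarith

lemma exists_kseq_gt {K : ℝ} (hK : 0 < K) (k : ℕ) : ∃ m, k < kseq K m := by
  refine ⟨max 3 ⌈(k + 1 : ℝ) / K⌉₊, ?_⟩
  set m := max 3 ⌈(k + 1 : ℝ) / K⌉₊ with hm
  have hm3 : 3 ≤ m := le_max_left _ _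
  have hmc : ((k:ℝ) + 1) / K ≤ (m : ℝ) := by
    calc ((k:ℝ) + 1) / K ≤ (⌈(k + 1 : ℝ) / K⌉₊ : ℝ) := Nat.le_ceil _
      _ ≤ (m : ℝ) := by
          have : ⌈(k + 1 : ℝ) / K⌉₊ ≤ m := le_max_right _ _
          exact_mod_cast this
  have h1 : (k : ℝ) + 1 ≤ K * m := by
    rw [div_le_iff₀ hK] at hmc; linarith
  have h2 : (k : ℝ) + 1 ≤ K * m * Real.log m := by
    have hlog := one_le_log_of_three_le hm3
    have hKm : 0 ≤ K * m := by positivity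
    calc (k : ℝ) + 1 ≤ K * m := h1
      _ = K * m * 1 := by ring
      _ ≤ K * m * Real.log m := mul_le_mul_of_nonneg_left hlog hKm
  have : k + 1 ≤ kseq K m := Nat.le_floor (by push_cast; linarith)
  omega

lemma kseq_interval_unique {K : ℝ} (hK : 0 < K) {k m m' : ℕ}
    (h1 : kseq K m < k ∧ k ≤ kseq K (m + 1))
    (h2 : kseq K m' < k ∧ k ≤ kseq K (m' + 1)) : m = m' := by
  by_contra hne
  rcases Nat.lt_or_ge m m' with h | h
  · have : kseq K (m + 1) ≤ kseq K m' := kseq_mono hK.le h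
    omega
  · have h' : m' < m := by omega
    have : kseq K (m' + 1) ≤ kseq K m := kseq_mono hK.le h'
    omega

lemma kseq_interval_exists {K : ℝ} (hK : 0 < K) {n k : ℕ} (hk : kseq K (n + 2) < k) :
    ∃ m, n + 2 ≤ m ∧ kseq K m < k ∧ k ≤ kseq K (m + 1) := by
  have hx : ∃ m, k ≤ kseq K m := by
    obtain ⟨m, hm⟩ := exists_kseq_gt hK k
    exact ⟨m, hm.le⟩
  classical
  let m' := Nat.find hx
  have hspec : k ≤ kseq K m' := Nat.find_spec hx
  have hge : n + 3 ≤ m' := by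
    by_contra hc
    have hle : m' ≤ n + 2 := by omega
    have : kseq K m' ≤ kseq K (n + 2) := kseq_mono hK.le hle
    omega
  refine ⟨m' - 1, by omega, ?_, ?_⟩
  · have := Nat.find_min hx (m := m' - 1) (by omega)
    omega
  · have : m' - 1 + 1 = m' := by omega
    rw [this]; exact hspec

lemma geom_range_le {r : ℝ} (h0 : 0 ≤ r) (hr : r ≤ 1 / 2) (M : ℕ) :
    ∑ j ∈ Finset.range M, r ^ j ≤ 2 := by
  have hr1 : r < 1 := by linarith
  have hsum := tsum_geometric_of_lt_one h0 hr1
  calc ∑ j ∈ Finset.range M, r ^ j ≤ ∑' j : ℕ, r ^ j :=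
        Summable.sum_le_tsum _ (fun i _ => pow_nonneg h0 i) (summable_geometric_of_lt_one h0 hr1)
    _ = (1 - r)⁻¹ := hsum
    _ ≤ 2 := by
        rw [inv_le_iff_one_le_mul₀ (by linarith)]
        linarith

lemma sum_Ioc_inv_pow_le {N : ℕ} (hN : 2 ≤ N) (a b : ℕ) :
    ∑ k ∈ Finset.Ioc a b, ((N : ℝ))⁻¹ ^ k ≤ ((N : ℝ))⁻¹ ^ a := by
  have hN0 : (0:ℝ) < N := by positivity
  have hNR : (2:ℝ) ≤ N := by exact_mod_cast hN
  have h0 : 0 ≤ ((N:ℝ))⁻¹ := by positivity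
  have hhalf : ((N:ℝ))⁻¹ ≤ 1 / 2 := by
    rw [inv_le_iff_one_le_mul₀ hN0]
    linarith
  have heq : Finset.Ioc a b = Finset.Ico (a + 1) (b + 1) := by
    ext x; simp [Finset.mem_Ioc, Finset.mem_Ico]
  rw [heq, Finset.sum_Ico_eq_sum_range]
  have : ∀ k ∈ Finset.range (b + 1 - (a + 1)), ((N:ℝ))⁻¹ ^ (a + 1 + k)
      = ((N:ℝ))⁻¹ ^ (a+1) * ((N:ℝ))⁻¹ ^ k := fun k _ => pow_add _ _ _
  rw [Finset.sum_congr rfl this, ← Finset.mul_sum]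
  calc ((N:ℝ))⁻¹ ^ (a+1) * ∑ k ∈ Finset.range (b + 1 - (a + 1)), ((N:ℝ))⁻¹ ^ k
      ≤ ((N:ℝ))⁻¹ ^ (a+1) * 2 := by
        exact mul_le_mul_of_nonneg_left (geom_range_le h0 hhalf _) (by positivity)
    _ = ((N:ℝ))⁻¹ ^ a * (((N:ℝ))⁻¹ * 2) := by ring
    _ ≤ ((N:ℝ))⁻¹ ^ a * 1 := by
        apply mul_le_mul_of_nonneg_left _ (by positivity)
        rw [inv_mul_le_iff₀ hN0] <;> linarith
    _ = ((N:ℝ))⁻¹ ^ a := by ring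


/-- `n log n - m log m ≤ -(m-n) log m` for `n ≤ m`. -/
lemma philog_le' {n m : ℕ} (h : n ≤ m) :
    (n : ℝ) * Real.log n - (m : ℝ) * Real.log m ≤ -(((m - n : ℕ) : ℝ) * Real.log m) := by
  have hc : ((m - n : ℕ) : ℝ) = (m : ℝ) - (n : ℝ) := by
    push_cast [Nat.cast_sub h]; ring
  rw [hc]
  have h1 : (n : ℝ) * Real.log n ≤ (n : ℝ) * Real.log m :=
    mul_le_mul_of_nonneg_left (log_natCast_mono h) (Nat.cast_nonneg n)
  nlinarith [log_natCast_nonneg m]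

/-- Key estimate A. -/
lemma keyA {N : ℕ} (hN : 2 ≤ N) (hK : 0 < K) {D : ℝ} (hD : 0 ≤ D) {n m : ℕ}
    (hm : n + 2 ≤ m) :
    (N : ℝ) ^ (kseq K n) * (D * ((N : ℝ))⁻¹ ^ (kseq K m)) ≤
      (N : ℝ) * D * (Real.exp (-(K * Real.log N) * Real.log m)) ^ (m - n) := by
  have hN0 : (0:ℝ) < N := by positivity
  have hL : 0 < Real.log N := Real.log_pos (by exact_mod_cast hN)
  set L := Real.log N with hLdef
  have hpow : ∀ j : ℕ, (N : ℝ) ^ j = Real.exp (j * L) := by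
    intro j
    rw [← Real.log_pow, Real.exp_log (by positivity)]
  have hpowinv : ∀ j : ℕ, ((N : ℝ))⁻¹ ^ j = (Real.exp (j * L))⁻¹ := by
    intro j
    rw [inv_pow, hpow j]
  rw [hpow, hpowinv]
  -- LHS = D * exp(kn L) / exp(km L)
  have hexp2 : Real.exp ((kseq K n : ℝ) * L) * (D * (Real.exp ((kseq K m : ℝ) * L))⁻¹)
      = D * Real.exp ((kseq K n : ℝ) * L - (kseq K m : ℝ) * L) := by
    rw [Real.exp_sub]; ring
  rw [hexp2]
  have hkey : (kseq K n : ℝ) * L - (kseq K m : ℝ) * L ≤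
      L + ((m - n : ℕ) : ℝ) * (-(K * L) * Real.log m) := by
    have h1 : (kseq K n : ℝ) ≤ K * n * Real.log n := kseq_le hK.le n
    have h2 : K * m * Real.log m - 1 < (kseq K m : ℝ) := kseq_gt m
    have h3 := philog_le' (show n ≤ m by omega)
    have h4 : (kseq K n : ℝ) - (kseq K m : ℝ) ≤ 1 + K * ((n:ℝ) * Real.log n - (m:ℝ) * Real.log m) := by
      nlinarith
    have h5 : K * ((n:ℝ) * Real.log n - (m:ℝ) * Real.log m) ≤
        K * (-(((m - n : ℕ) : ℝ) * Real.log m)) :=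
      mul_le_mul_of_nonneg_left h3 hK.le
    calc (kseq K n : ℝ) * L - (kseq K m : ℝ) * L
        = ((kseq K n : ℝ) - (kseq K m : ℝ)) * L := by ring
      _ ≤ (1 + K * (-(((m - n : ℕ) : ℝ) * Real.log m))) * L := by
          apply mul_le_mul_of_nonneg_right _ hL.le
          linarith
      _ = L + ((m - n : ℕ) : ℝ) * (-(K * L) * Real.log m) := by ring
  calc D * Real.exp ((kseq K n : ℝ) * L - (kseq K m : ℝ) * L)
      ≤ D * Real.exp (L + ((m - n : ℕ) : ℝ) * (-(K * L) * Real.log m)) :=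
        mul_le_mul_of_nonneg_left (Real.exp_le_exp.2 hkey) hD
    _ = (N : ℝ) * D * (Real.exp (-(K * L) * Real.log m)) ^ (m - n) := by
        rw [Real.exp_add, Real.exp_nat_mul, Real.exp_log hN0]; ring

/-- exp(-κ log m) ≤ 1/2 for m ≥ 2, κ ≥ 2. -/
lemma exp_neg_kappa_le_half {κ : ℝ} (hκ : 2 ≤ κ) {m : ℕ} (hm : 2 ≤ m) :
    Real.exp (-κ * Real.log m) ≤ 1 / 2 := by
  have hlog2 : Real.log 2 ≤ Real.log m := by
    apply Real.log_le_log (by norm_num)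
    exact_mod_cast hm
  have hlog2pos : (0:ℝ) < Real.log 2 := Real.log_pos (by norm_num)
  have h1 : Real.log 2 ≤ κ * Real.log m := by nlinarith
  calc Real.exp (-κ * Real.log m) ≤ Real.exp (-Real.log 2) := by
        apply Real.exp_le_exp.2; linarith
    _ = 1 / 2 := by
        rw [Real.exp_neg, Real.exp_log (by norm_num : (0:ℝ) < 2)]; norm_num

/-- Per-m sum over n. -/
lemma sum_pow_sub_le {r : ℝ} (h0 : 0 ≤ r) (hr : r ≤ 1 / 2) (m : ℕ) :
    ∑ n ∈ Finset.range (m - 1), r ^ (m - n) ≤ 2 * r ^ 2 := by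
  set M := m - 1 with hM
  have step : ∀ n ∈ Finset.range M, r ^ (m - n) = r ^ 2 * r ^ (M - 1 - n) := by
    intro n hn
    rw [Finset.mem_range] at hn
    rw [← pow_add]
    congr 1
    omega
  rw [Finset.sum_congr rfl step, ← Finset.mul_sum]
  rw [Finset.sum_range_reflect (fun j => r ^ j) M]
  calc r ^ 2 * ∑ j ∈ Finset.range M, r ^ j ≤ r ^ 2 * 2 :=
        mul_le_mul_of_nonneg_left (geom_range_le h0 hr M) (by positivity)
    _ = 2 * r ^ 2 := by ring

/-- Tail bound: for m ≥ 1, Dm(m+1) ≤ M₁·m^(β+ε). -/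
lemma D_le {N : ℕ} (hN : 2 ≤ N) {C a b ε : ℝ} (hC : 0 ≤ C) (ha : 0 < a) (hb : 0 < b)
    (hε : 0 < ε) {m : ℕ} (hm : 1 ≤ m) :
    C + a * Real.log (m + 1 : ℕ) * (N : ℝ) ^ (b * Real.log (m + 1 : ℕ)) ≤
      (C + a * 2 ^ ε * Real.exp (b * Real.log N) / ε) * (m : ℝ) ^ (ε + b * Real.log N) := by
  have hN0 : (0:ℝ) < N := by positivity
  have hm0 : (0:ℝ) < m := by exact_mod_cast hm
  have hm1 : (1:ℝ) ≤ m := by exact_mod_cast hm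
  set β := b * Real.log N with hβ
  have hL : 0 < Real.log N := Real.log_pos (by exact_mod_cast hN)
  have hβ0 : 0 < β := by positivity
  -- log(m+1) ≤ 1 + log m
  have hlog1 : Real.log ((m:ℝ) + 1) ≤ 1 + Real.log m := by
    have h2 : ((m:ℝ) + 1) ≤ Real.exp 1 * m := by
      have : (2:ℝ) ≤ Real.exp 1 := by
        have := Real.exp_one_gt_d9
        linarith
      nlinarith
    calc Real.log ((m:ℝ) + 1) ≤ Real.log (Real.exp 1 * m) :=
          Real.log_le_log (by positivity) h2
      _ = 1 + Real.log m := by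
          rw [Real.log_mul (Real.exp_ne_zero 1) (by positivity), Real.log_exp]
  -- log(m+1) ≤ 2^ε * m^ε / ε
  have hlog2 : Real.log ((m:ℝ) + 1) ≤ 2 ^ ε * (m:ℝ) ^ ε / ε := by
    calc Real.log ((m:ℝ) + 1) ≤ ((m:ℝ) + 1) ^ ε / ε :=
          Real.log_le_rpow_div (by positivity) hε
      _ ≤ (2 * m : ℝ) ^ ε / ε := by
          have hrp : ((m:ℝ) + 1) ^ ε ≤ (2 * m : ℝ) ^ ε :=
            Real.rpow_le_rpow (by positivity) (by linarith) hε.le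
          exact div_le_div_of_nonneg_right hrp hε.le
      _ = 2 ^ ε * (m:ℝ) ^ ε / ε := by
          rw [Real.mul_rpow (by norm_num) (by positivity)]
  -- N^(b log(m+1)) ≤ e^β * m^β
  have hrpow : (N : ℝ) ^ (b * Real.log ((m:ℝ) + 1)) ≤ Real.exp β * (m:ℝ) ^ β := by
    rw [Real.rpow_def_of_pos hN0, Real.rpow_def_of_pos hm0]
    rw [← Real.exp_add]
    apply Real.exp_le_exp.2
    have : b * Real.log ((m:ℝ)+1) * Real.log N ≤ b * (1 + Real.log m) * Real.log N := by
      apply mul_le_mul_of_nonneg_right _ hL.le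
      exact mul_le_mul_of_nonneg_left hlog1 hb.le
    calc Real.log N * (b * Real.log ((m:ℝ)+1)) = b * Real.log ((m:ℝ)+1) * Real.log N := by ring
      _ ≤ b * (1 + Real.log m) * Real.log N := this
      _ = β + Real.log m * β := by rw [hβ]; ring
  have hmain : a * Real.log ((m:ℝ)+1) * (N : ℝ) ^ (b * Real.log ((m:ℝ)+1)) ≤
      (a * 2 ^ ε * Real.exp β / ε) * (m:ℝ) ^ (ε + β) := by
    have hlognn : 0 ≤ Real.log ((m:ℝ)+1) := Real.log_nonneg (by linarith)
    have hrnn : 0 ≤ (N : ℝ) ^ (b * Real.log ((m:ℝ)+1)) := Real.rpow_nonneg hN0.le _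
    calc a * Real.log ((m:ℝ)+1) * (N : ℝ) ^ (b * Real.log ((m:ℝ)+1))
        ≤ a * (2 ^ ε * (m:ℝ) ^ ε / ε) * (Real.exp β * (m:ℝ) ^ β) := by
          apply mul_le_mul
          · exact mul_le_mul_of_nonneg_left hlog2 ha.le
          · exact hrpow
          · exact hrnn
          · positivity
      _ = (a * 2 ^ ε * Real.exp β / ε) * ((m:ℝ) ^ ε * (m:ℝ) ^ β) := by ring
      _ = (a * 2 ^ ε * Real.exp β / ε) * (m:ℝ) ^ (ε + β) := by
          rw [← Real.rpow_add hm0]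
  have hCterm : C ≤ C * (m:ℝ) ^ (ε + β) := by
    nlinarith [Real.one_le_rpow hm1 (by positivity : (0:ℝ) ≤ ε + β), hC]
  have hcast : Real.log ((m + 1 : ℕ) : ℝ) = Real.log ((m:ℝ) + 1) := by push_cast; ring_nf
  rw [hcast]
  nlinarith [hmain, hCterm]


end AuxLemmas

/-- Critical case `δ = 1`, `k_n = ⌊K n log n⌋`, rates
`c_{k_n} = C + a log n · N^{b log n}` with `2 / log N < K < b < 2K - 1/log N`:
almost surely there is `n₀` such that for all `n ≥ n₀`, edges between
`X_{k_n} ∩ (B_{k_n} \ B_{k_{n-1}})` and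
`X_{k_{n+ℓ}} ∩ (B_{k_{n+ℓ}} \ B_{k_{n+ℓ-1}})` occur only for `ℓ = 1, 2`
(i.e. never for `ℓ ≥ 3`): the percolation cluster is a cascade of clusters at
the distances `k_n`. -/
theorem critical_cascade_of_clusters
    (N : ℕ) (hN : 2 ≤ N) (K b C a : ℝ)
    (hK : 2 / Real.log N < K) (hKb : K < b) (hb2 : b < 2 * K - 1 / Real.log N)
    (hC : 0 ≤ C) (ha : 0 < a) (hb : 0 < b)
    (c : ℕ → ℝ)
    (hck : ∀ n : ℕ, 1 ≤ n →
      c (kseq K n) = C + a * Real.log n * (N : ℝ) ^ (b * Real.log n))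
    (hmono : ∀ n : ℕ, 1 ≤ n → ∀ j : ℕ, kseq K n < j → j < kseq K (n + 1) →
      c (kseq K n) ≤ c j ∧ c j ≤ c (kseq K (n + 1)))
    (Ω : Type) [MeasurableSpace Ω] (μ : Measure Ω) [IsProbabilityMeasure μ]
    (E : Sym2 (HierGroup N) → Ω → Bool)
    (hE : ∀ e, Measurable (E e))
    (hind : iIndepFun E μ)
    (hprob : EdgeProbOK N 1 c μ E) :
    μ {ω | ∃ n0 : ℕ, 1 ≤ n0 ∧ ∀ n : ℕ, n0 ≤ n → ∀ l : ℕ, 3 ≤ l →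
        ∀ S S' : Set (HierGroup N),
          IsLargestCluster N (graphOf E ω) (kseq K n) S →
          IsLargestCluster N (graphOf E ω) (kseq K (n + l)) S' →
          ∀ x ∈ S ∩ (hball N (kseq K n) \ hball N (kseq K (n - 1))),
          ∀ y ∈ S' ∩ (hball N (kseq K (n + l)) \ hball N (kseq K (n + l - 1))),
            ¬ (graphOf E ω).Adj x y} = 1 := by
  classical
  haveI : NeZero N := ⟨by omega⟩
  have hN1 : (1:ℝ) < N := by exact_mod_cast (by omega : 1 < N)
  have hL : 0 < Real.log N := Real.log_pos hN1
  have hK0 : 0 < K := lt_trans (div_pos two_pos hL) hK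
  have hκ : 2 < K * Real.log N := by
    rw [div_lt_iff₀ hL] at hK; linarith
  have hβκ : b * Real.log N < 2 * (K * Real.log N) - 1 := by
    have h1 : b * Real.log N < (2 * K - 1 / Real.log N) * Real.log N :=
      mul_lt_mul_of_pos_right hb2 hL
    have h2 : (1 / Real.log N) * Real.log N = 1 := by field_simp
    nlinarith
  set ε : ℝ := (2 * (K * Real.log N) - 1 - b * Real.log N) / 2 with hεdef
  have hε : 0 < ε := by rw [hεdef]; linarith
  -- the rate function at the scales
  set D : ℕ → ℝ := fun t => C + a * Real.log t * (N:ℝ) ^ (b * Real.log t) with hDdef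
  have hD0 : ∀ t : ℕ, 0 ≤ D t := by
    intro t
    have h1 : 0 ≤ Real.log t := log_natCast_nonneg t
    have h2 : 0 ≤ (N:ℝ) ^ (b * Real.log t) := Real.rpow_nonneg (by positivity) _
    have : 0 ≤ a * Real.log t * (N:ℝ) ^ (b * Real.log t) := by positivity
    rw [hDdef]; dsimp only; linarith
  have hcle : ∀ m k : ℕ, 1 ≤ m → kseq K m < k → k ≤ kseq K (m+1) → c k ≤ D (m+1) := by
    intro m k hm h1 h2
    have hD1 : c (kseq K (m+1)) = D (m+1) := hck (m+1) (by omega)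
    rcases eq_or_lt_of_le h2 with he | hlt
    · rw [he, hD1]
    · exact le_trans ((hmono m hm k h1 hlt).2) (le_of_eq hD1)
  -- bad events
  set Ap : ℕ → (HierGroup N × HierGroup N) → Set Ω := fun n p =>
    {ω | hdist 0 p.1 ≤ kseq K n ∧ kseq K (n+2) < hdist 0 p.2 ∧ E s(p.1, p.2) ω = true}
    with hApdef
  set Bset : ℕ → Set Ω := fun n => ⋃ p, Ap n p with hBdef
  -- per-pair weights
  set af : ℕ → HierGroup N → ENNReal := fun n x =>
    if hdist 0 x ≤ kseq K n then 1 else 0 with hafdef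
  set gf : ℕ → HierGroup N → ENNReal := fun n y =>
    if kseq K (n+2) < hdist 0 y then
      ENNReal.ofReal (c (hdist 0 y) / (N:ℝ) ^ (2 * hdist 0 y)) else 0 with hgfdef
  have step_pair : ∀ n p, μ (Ap n p) ≤ af n p.1 * gf n p.2 := by
    intro n p
    rw [hafdef, hgfdef]; dsimp only
    by_cases h1 : hdist 0 p.1 ≤ kseq K n
    · by_cases h2 : kseq K (n+2) < hdist 0 p.2
      · rw [if_pos h1, if_pos h2, one_mul]
        have hlt : hdist 0 p.1 < hdist 0 p.2 :=
          lt_of_le_of_lt (h1.trans (kseq_mono hK0.le (by omega))) h2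
        have hne : p.1 ≠ p.2 := by
          intro he; rw [he] at hlt; exact lt_irrefl _ hlt
        have hsub : Ap n p ⊆ {ω | E s(p.1, p.2) ω = true} := fun ω hω => hω.2.2
        refine (measure_mono hsub).trans ?_
        rw [hprob p.1 p.2 hne]
        apply ENNReal.ofReal_le_ofReal
        rw [hdist_ultra hlt]
        have hden : (N:ℝ) ^ ((hdist 0 p.2 : ℝ) * (1 + 1)) = (N:ℝ) ^ (2 * hdist 0 p.2) := by
          rw [show ((hdist 0 p.2 : ℝ) * (1 + 1)) = ((2 * hdist 0 p.2 : ℕ) : ℝ) by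
            push_cast; ring, Real.rpow_natCast]
        rw [hden]
        exact min_le_left _ _
      · have hempty : Ap n p = ∅ := by
          ext ω
          simp only [hApdef, Set.mem_setOf_eq, Set.mem_empty_iff_false, iff_false]
          tauto
        rw [hempty, measure_empty, if_neg h2, mul_zero]
    · have hempty : Ap n p = ∅ := by
        ext ω
        simp only [hApdef, Set.mem_setOf_eq, Set.mem_empty_iff_false, iff_false]
        tauto
      rw [hempty, measure_empty, if_neg h1, zero_mul]
  -- step sums over vertices
  set Gk : ℕ → ℕ → ENNReal := fun n k =>
    if kseq K (n+2) < k then ENNReal.ofReal (c k / (N:ℝ) ^ k) else 0 with hGkdef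
  have step_B : ∀ n, μ (Bset n) ≤ (N : ENNReal) ^ (kseq K n) * ∑' k : ℕ, Gk n k := by
    intro n
    have h1 : μ (Bset n) ≤ ∑' p : HierGroup N × HierGroup N, μ (Ap n p) := by
      rw [hBdef]; exact measure_iUnion_le _
    have h2 : (∑' p : HierGroup N × HierGroup N, μ (Ap n p)) ≤
        ∑' p : HierGroup N × HierGroup N, af n p.1 * gf n p.2 :=
      ENNReal.tsum_le_tsum (step_pair n)
    have h3 : (∑' p : HierGroup N × HierGroup N, af n p.1 * gf n p.2)
        = (∑' x, af n x) * ∑' y, gf n y := by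
      rw [ENNReal.tsum_prod (f := fun x y => af n x * gf n y)]
      calc (∑' (x) (y), af n x * gf n y) = ∑' x, af n x * ∑' y, gf n y := by
            congr 1; funext x; exact ENNReal.tsum_mul_left
        _ = (∑' x, af n x) * ∑' y, gf n y := ENNReal.tsum_mul_right
    have h4 : (∑' x, af n x) ≤ (N : ENNReal) ^ (kseq K n) * 1 := by
      apply tsum_le_of_support_hball
      · intro y hy
        rw [hafdef]; dsimp only
        rw [if_neg]
        exact fun hc => hy hc
      · intro y
        rw [hafdef]; dsimp only
        split_ifs <;> simp
    have h5 : (∑' y, gf n y) ≤ ∑' k : ℕ, Gk n k := by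
      have hg : ∀ y, gf n y = ∑' k : ℕ, (if hdist 0 y = k then
          (if kseq K (n+2) < k then
            ENNReal.ofReal (c k / (N:ℝ) ^ (2 * k)) else 0) else 0) := by
        intro y
        rw [tsum_eq_single (hdist 0 y)]
        · rw [if_pos rfl, hgfdef]
        · intro k' hk'
          rw [if_neg (fun hc => hk' hc.symm)]
      calc (∑' y, gf n y) = ∑' (y) (k : ℕ), (if hdist 0 y = k then
            (if kseq K (n+2) < k then
              ENNReal.ofReal (c k / (N:ℝ) ^ (2 * k)) else 0) else 0) := tsum_congr hg
        _ = ∑' (k : ℕ) (y : HierGroup N), (if hdist 0 y = k then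
            (if kseq K (n+2) < k then
              ENNReal.ofReal (c k / (N:ℝ) ^ (2 * k)) else 0) else 0) := ENNReal.tsum_comm
        _ ≤ ∑' k : ℕ, Gk n k := by
            apply ENNReal.tsum_le_tsum
            intro k
            have hfiber : (∑' y : HierGroup N, (if hdist 0 y = k then
                (if kseq K (n+2) < k then
                  ENNReal.ofReal (c k / (N:ℝ) ^ (2 * k)) else 0) else 0)) ≤
                (N : ENNReal) ^ k * (if kseq K (n+2) < k then
                  ENNReal.ofReal (c k / (N:ℝ) ^ (2 * k)) else 0) := by
              apply tsum_le_of_support_hball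
              · intro y hy
                rw [if_neg]
                intro hc
                exact hy (le_of_eq hc)
              · intro y
                split_ifs <;> simp
            refine hfiber.trans (le_of_eq ?_)
            rw [hGkdef]; dsimp only
            split_ifs with hcond
            · rw [show ((N : ENNReal) ^ k) = ENNReal.ofReal ((N:ℝ) ^ k) by
                rw [ENNReal.ofReal_pow (by positivity), ENNReal.ofReal_natCast]]
              rw [← ENNReal.ofReal_mul (by positivity)]
              congr 1
              have hNk : ((N:ℝ)) ^ k ≠ 0 := by positivity
              rw [two_mul, pow_add]
              field_simp
            · rw [mul_zero]
    calc μ (Bset n) ≤ (∑' x, af n x) * ∑' y, gf n y := h1.trans (h2.trans (le_of_eq h3))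
      _ ≤ ((N : ENNReal) ^ (kseq K n) * 1) * ∑' k : ℕ, Gk n k := mul_le_mul' h4 h5
      _ = (N : ENNReal) ^ (kseq K n) * ∑' k : ℕ, Gk n k := by rw [mul_one]
  -- step: decompose the k-sum into scale intervals
  set Hm : ℕ → ℕ → ENNReal := fun n m =>
    if n + 2 ≤ m then ENNReal.ofReal (D (m+1) * ((N:ℝ))⁻¹ ^ (kseq K m)) else 0 with hHmdef
  have step_G : ∀ n, (∑' k : ℕ, Gk n k) ≤ ∑' m : ℕ, Hm n m := by
    intro n
    have hdecomp : ∀ k, Gk n k = ∑' m : ℕ,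
        (if (n + 2 ≤ m ∧ kseq K m < k ∧ k ≤ kseq K (m+1)) then Gk n k else 0) := by
      intro k
      by_cases hk : kseq K (n+2) < k
      · obtain ⟨m₀, hm₀1, hm₀2, hm₀3⟩ := kseq_interval_exists hK0 hk
        rw [tsum_eq_single m₀]
        · rw [if_pos ⟨hm₀1, hm₀2, hm₀3⟩]
        · intro m' hm'
          rw [if_neg]
          rintro ⟨h1', h2', h3'⟩
          exact hm' (kseq_interval_unique hK0 ⟨h2', h3'⟩ ⟨hm₀2, hm₀3⟩)
      · rw [show Gk n k = 0 from if_neg hk]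
        symm
        rw [ENNReal.tsum_eq_zero]
        intro m
        rw [if_neg]
        rintro ⟨h1', h2', h3'⟩
        have : kseq K (n+2) ≤ kseq K m := kseq_mono hK0.le (by omega)
        omega
    calc (∑' k : ℕ, Gk n k) = ∑' (k : ℕ) (m : ℕ),
          (if (n + 2 ≤ m ∧ kseq K m < k ∧ k ≤ kseq K (m+1)) then Gk n k else 0) :=
          tsum_congr hdecomp
      _ = ∑' (m : ℕ) (k : ℕ),
          (if (n + 2 ≤ m ∧ kseq K m < k ∧ k ≤ kseq K (m+1)) then Gk n k else 0) :=
          ENNReal.tsum_comm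
      _ ≤ ∑' m : ℕ, Hm n m := by
          apply ENNReal.tsum_le_tsum
          intro m
          by_cases hm : n + 2 ≤ m
          · rw [show Hm n m = ENNReal.ofReal (D (m+1) * ((N:ℝ))⁻¹ ^ (kseq K m)) from
              if_pos hm]
            have hsupp : ∀ k ∉ Finset.Ioc (kseq K m) (kseq K (m+1)),
                (if (n + 2 ≤ m ∧ kseq K m < k ∧ k ≤ kseq K (m+1)) then Gk n k else 0) = 0 := by
              intro k hk
              rw [if_neg]
              rintro ⟨h1', h2', h3'⟩
              exact hk (Finset.mem_Ioc.2 ⟨h2', h3'⟩)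
            rw [tsum_eq_sum hsupp]
            have hterm : ∀ k ∈ Finset.Ioc (kseq K m) (kseq K (m+1)),
                (if (n + 2 ≤ m ∧ kseq K m < k ∧ k ≤ kseq K (m+1)) then Gk n k else 0) ≤
                ENNReal.ofReal (D (m+1) * ((N:ℝ))⁻¹ ^ k) := by
              intro k hk
              rw [Finset.mem_Ioc] at hk
              split_ifs with hcond
              · have hk2 : kseq K (n+2) < k := lt_of_le_of_lt (kseq_mono hK0.le hm) hk.1
                rw [show Gk n k = ENNReal.ofReal (c k / (N:ℝ) ^ k) from if_pos hk2]
                apply ENNReal.ofReal_le_ofReal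
                have hc := hcle m k (by omega) hk.1 hk.2
                rw [div_eq_mul_inv, ← inv_pow]
                exact mul_le_mul_of_nonneg_right hc (by positivity)
              · exact zero_le
            calc (∑ k ∈ Finset.Ioc (kseq K m) (kseq K (m+1)),
                  (if (n + 2 ≤ m ∧ kseq K m < k ∧ k ≤ kseq K (m+1)) then Gk n k else 0)) ≤
                  ∑ k ∈ Finset.Ioc (kseq K m) (kseq K (m+1)),
                    ENNReal.ofReal (D (m+1) * ((N:ℝ))⁻¹ ^ k) := Finset.sum_le_sum hterm
              _ = ENNReal.ofReal (∑ k ∈ Finset.Ioc (kseq K m) (kseq K (m+1)),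
                    D (m+1) * ((N:ℝ))⁻¹ ^ k) := by
                  rw [ENNReal.ofReal_sum_of_nonneg]
                  intro k _
                  have := hD0 (m+1)
                  positivity
              _ ≤ ENNReal.ofReal (D (m+1) * ((N:ℝ))⁻¹ ^ (kseq K m)) := by
                  apply ENNReal.ofReal_le_ofReal
                  rw [← Finset.mul_sum]
                  exact mul_le_mul_of_nonneg_left
                    (sum_Ioc_inv_pow_le hN _ _) (hD0 (m+1))
          · rw [show Hm n m = 0 from if_neg hm]
            refine le_of_eq (ENNReal.tsum_eq_zero.2 ?_)
            intro k
            rw [if_neg]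
            rintro ⟨h1', _, _⟩
            exact hm h1'
  -- step: key estimate per (n,m)
  set F2 : ℕ → ℕ → ENNReal := fun n m =>
    if n + 2 ≤ m then ENNReal.ofReal ((N:ℝ) * D (m+1) *
      (Real.exp (-(K * Real.log N) * Real.log m)) ^ (m - n)) else 0 with hF2def
  have step_nm : ∀ n, μ (Bset n) ≤ ∑' m : ℕ, F2 n m := by
    intro n
    refine (step_B n).trans ?_
    refine (mul_le_mul_right (step_G n) _).trans ?_
    refine le_trans (le_of_eq ENNReal.tsum_mul_left.symm) ?_
    apply ENNReal.tsum_le_tsum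
    intro m
    rw [hHmdef, hF2def]; dsimp only
    split_ifs with hm
    · rw [show ((N : ENNReal) ^ (kseq K n)) = ENNReal.ofReal ((N:ℝ) ^ (kseq K n)) by
        rw [ENNReal.ofReal_pow (by positivity), ENNReal.ofReal_natCast]]
      rw [← ENNReal.ofReal_mul (by positivity)]
      exact ENNReal.ofReal_le_ofReal (keyA hN hK0 (hD0 (m+1)) hm)
    · rw [mul_zero]
  -- step: sum over n for fixed m
  set Tm : ℕ → ENNReal := fun m =>
    if 2 ≤ m then ENNReal.ofReal (2 * ((N:ℝ) * D (m+1)) *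
      (Real.exp (-(K * Real.log N) * Real.log m)) ^ 2) else 0 with hTmdef
  have step_m : ∀ m, (∑' n : ℕ, F2 n m) ≤ Tm m := by
    intro m
    rw [hTmdef]; dsimp only
    by_cases hm2 : 2 ≤ m
    · rw [if_pos hm2]
      have hr0 : 0 ≤ Real.exp (-(K * Real.log N) * Real.log m) := (Real.exp_pos _).le
      have hr2 : Real.exp (-(K * Real.log N) * Real.log m) ≤ 1 / 2 :=
        exp_neg_kappa_le_half hκ.le hm2
      have hsupp : ∀ n ∉ Finset.range (m - 1), F2 n m = 0 := by
        intro n hn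
        rw [Finset.mem_range] at hn
        rw [hF2def]; dsimp only
        exact if_neg (by omega)
      rw [tsum_eq_sum hsupp]
      have hval : ∀ n ∈ Finset.range (m - 1), F2 n m = ENNReal.ofReal ((N:ℝ) * D (m+1) *
          (Real.exp (-(K * Real.log N) * Real.log m)) ^ (m - n)) := by
        intro n hn
        rw [Finset.mem_range] at hn
        rw [hF2def]; dsimp only
        exact if_pos (by omega)
      rw [Finset.sum_congr rfl hval, ← ENNReal.ofReal_sum_of_nonneg (by
        intro n _
        have := hD0 (m+1)
        positivity)]
      apply ENNReal.ofReal_le_ofReal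
      have hfac : ∀ n ∈ Finset.range (m - 1), (N:ℝ) * D (m+1) *
          (Real.exp (-(K * Real.log N) * Real.log m)) ^ (m - n) =
          ((N:ℝ) * D (m+1)) * (Real.exp (-(K * Real.log N) * Real.log m)) ^ (m - n) :=
        fun n _ => by ring
      rw [Finset.sum_congr rfl hfac, ← Finset.mul_sum]
      have hD := hD0 (m+1)
      calc ((N:ℝ) * D (m+1)) * ∑ n ∈ Finset.range (m - 1),
            (Real.exp (-(K * Real.log N) * Real.log m)) ^ (m - n)
          ≤ ((N:ℝ) * D (m+1)) * (2 * (Real.exp (-(K * Real.log N) * Real.log m)) ^ 2) :=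
            mul_le_mul_of_nonneg_left (sum_pow_sub_le hr0 hr2 m) (by positivity)
        _ = 2 * ((N:ℝ) * D (m+1)) * (Real.exp (-(K * Real.log N) * Real.log m)) ^ 2 := by
            ring
    · rw [if_neg hm2]
      refine le_of_eq (ENNReal.tsum_eq_zero.2 ?_)
      intro n
      rw [hF2def]; dsimp only
      exact if_neg (by omega)
  -- step: summability of the tail
  set M₁ : ℝ := C + a * 2 ^ ε * Real.exp (b * Real.log N) / ε with hM₁def
  have hM₁ : 0 ≤ M₁ := by
    rw [hM₁def]
    have : 0 < a * 2 ^ ε * Real.exp (b * Real.log N) / ε := by positivity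
    linarith
  set g : ℕ → ℝ := fun m => 2 * (N:ℝ) * M₁ *
    (m:ℝ) ^ ((ε + b * Real.log N) + -(2 * (K * Real.log N))) with hgdef
  have hg0 : ∀ m, 0 ≤ g m := by
    intro m
    rw [hgdef]; dsimp only
    have : (0:ℝ) ≤ (m:ℝ) ^ ((ε + b * Real.log N) + -(2 * (K * Real.log N))) :=
      Real.rpow_nonneg (Nat.cast_nonneg m) _
    positivity
  have hgsummable : Summable g := by
    rw [hgdef]
    apply Summable.mul_left
    apply Real.summable_nat_rpow.2
    rw [hεdef]
    linarith
  have step_tail : (∑' m : ℕ, Tm m) ≠ ⊤ := by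
    have hTle : ∀ m, Tm m ≤ ENNReal.ofReal (g m) := by
      intro m
      rw [hTmdef]; dsimp only
      by_cases hm2 : 2 ≤ m
      · rw [if_pos hm2]
        apply ENNReal.ofReal_le_ofReal
        have hm1 : 1 ≤ m := by omega
        have hm0 : (0:ℝ) < m := by positivity
        have hDle : D (m+1) ≤ M₁ * (m:ℝ) ^ (ε + b * Real.log N) := by
          rw [hDdef, hM₁def]; dsimp only
          have := D_le hN hC ha hb hε hm1
          convert this using 3 <;> push_cast <;> ring
        have hrsq : (Real.exp (-(K * Real.log N) * Real.log m)) ^ 2 =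
            (m:ℝ) ^ (-(2 * (K * Real.log N))) := by
          rw [sq, ← Real.exp_add, Real.rpow_def_of_pos hm0]
          congr 1
          ring
        rw [hrsq, hgdef]; dsimp only
        calc 2 * ((N:ℝ) * D (m+1)) * (m:ℝ) ^ (-(2 * (K * Real.log N)))
            ≤ 2 * ((N:ℝ) * (M₁ * (m:ℝ) ^ (ε + b * Real.log N))) *
              (m:ℝ) ^ (-(2 * (K * Real.log N))) := by
              apply mul_le_mul_of_nonneg_right _ (Real.rpow_nonneg hm0.le _)
              have hN0 : (0:ℝ) ≤ N := by positivity
              nlinarith [hDle, hD0 (m+1)]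
          _ = 2 * (N:ℝ) * M₁ * ((m:ℝ) ^ (ε + b * Real.log N) *
              (m:ℝ) ^ (-(2 * (K * Real.log N)))) := by ring
          _ = g m := by
              rw [← Real.rpow_add hm0, hgdef]
      · rw [if_neg hm2]
        exact zero_le
    have : (∑' m : ℕ, Tm m) ≤ ENNReal.ofReal (∑' m, g m) := by
      rw [ENNReal.ofReal_tsum_of_nonneg hg0 hgsummable]
      exact ENNReal.tsum_le_tsum hTle
    exact ne_top_of_le_ne_top ENNReal.ofReal_ne_top this
  -- Borel–Cantelli
  have hsum : (∑' n : ℕ, μ (Bset n)) ≠ ⊤ := by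
    have h1 : (∑' n : ℕ, μ (Bset n)) ≤ ∑' (n : ℕ) (m : ℕ), F2 n m :=
      ENNReal.tsum_le_tsum step_nm
    have h2 : (∑' (n : ℕ) (m : ℕ), F2 n m) = ∑' (m : ℕ) (n : ℕ), F2 n m :=
      ENNReal.tsum_comm
    have h3 : (∑' (m : ℕ) (n : ℕ), F2 n m) ≤ ∑' m : ℕ, Tm m :=
      ENNReal.tsum_le_tsum step_m
    exact ne_top_of_le_ne_top step_tail (h1.trans (h2 ▸ h3))
  have hlimsup : μ (limsup Bset atTop) = 0 := measure_limsup_atTop_eq_zero hsum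
  have hT1 : μ ((limsup Bset atTop)ᶜ) = 1 := by
    have hle : (1:ENNReal) ≤ μ ((limsup Bset atTop)ᶜ) := by
      have h0 : μ Set.univ ≤ μ ((limsup Bset atTop)ᶜ) + μ (limsup Bset atTop) := by
        calc μ Set.univ = μ ((limsup Bset atTop)ᶜ ∪ limsup Bset atTop) := by
              rw [Set.compl_union_self]
          _ ≤ _ := measure_union_le _ _
      rw [hlimsup, add_zero, measure_univ] at h0
      exact h0
    exact le_antisymm prob_le_one hle
  -- interpretation of the complement
  have hsubset : (limsup Bset atTop)ᶜ ⊆ {ω | ∃ n0 : ℕ, 1 ≤ n0 ∧ ∀ n : ℕ, n0 ≤ n →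
      ∀ l : ℕ, 3 ≤ l → ∀ S S' : Set (HierGroup N),
        IsLargestCluster N (graphOf E ω) (kseq K n) S →
        IsLargestCluster N (graphOf E ω) (kseq K (n + l)) S' →
        ∀ x ∈ S ∩ (hball N (kseq K n) \ hball N (kseq K (n - 1))),
        ∀ y ∈ S' ∩ (hball N (kseq K (n + l)) \ hball N (kseq K (n + l - 1))),
          ¬ (graphOf E ω).Adj x y} := by
    intro ω hω
    have hev : ∃ n1 : ℕ, ∀ i, n1 ≤ i → ω ∉ Bset i := by
      rw [Set.mem_compl_iff, limsup_eq_iInf_iSup_of_nat] at hω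
      simp only [Set.iInf_eq_iInter, Set.iSup_eq_iUnion, Set.mem_iInter, Set.mem_iUnion,
        not_forall, not_exists] at hω
      obtain ⟨n1, hn1⟩ := hω
      exact ⟨n1, fun i hi => hn1 i hi⟩
    obtain ⟨n1, hn1⟩ := hev
    refine ⟨max n1 1, le_max_right _ _, ?_⟩
    intro n hn l hl S S' hS hS' x hx y hy hadj
    have hωn : ω ∉ Bset n := hn1 n (le_trans (le_max_left _ _) hn)
    apply hωn
    rw [hBdef]
    refine Set.mem_iUnion.2 ⟨(x, y), ?_⟩
    have hx1 : hdist 0 x ≤ kseq K n := hx.2.1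
    have hy2 : ¬ (hdist 0 y ≤ kseq K (n + l - 1)) := hy.2.2
    have hmono2 : kseq K (n+2) ≤ kseq K (n + l - 1) := kseq_mono hK0.le (by omega)
    have hgoal : kseq K (n+2) < hdist 0 y := by omega
    exact ⟨hx1, hgoal, (show x ≠ y ∧ E s(x, y) ω = true from hadj).2⟩
  refine le_antisymm prob_le_one ?_
  calc (1:ENNReal) = μ ((limsup Bset atTop)ᶜ) := hT1.symm
    _ ≤ _ := measure_mono hsubset
end

section
/- Let δ = 1 and k_n = ⌊K n log n⌋ for some K > 0, and let X_{k_n} denote the largest cluster of the nested ball B_{k_n} containing 0. Assume that for some β > 0, some n_0, and some p_* > 0, P(|X_{k_n}| ≥ β N^{k_n} for all n ≥ n_0) = p_* > 0. Then percolation occurs in G_N. -/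
open MeasureTheory ProbabilityTheory Filter

/- ============================  Auxiliary material  ============================ -/

namespace PercAux

variable {N : ℕ}

lemma hdist_le_iff {x y : HierGroup N} {k : ℕ} :
    hdist x y ≤ k ↔ ∀ i ∈ (x - y).support, i < k := by
  unfold hdist
  rw [Finset.sup_le_iff]
  exact forall₂_congr fun i _ => by omega

lemma mem_hball_iff {y : HierGroup N} {k : ℕ} :
    y ∈ hball N k ↔ ∀ i ∈ y.support, i < k := by
  show hdist 0 y ≤ k ↔ _
  rw [hdist_le_iff]
  simp [zero_sub, Finsupp.support_neg]

lemma zero_mem_hball {k : ℕ} : (0 : HierGroup N) ∈ hball N k := by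
  rw [mem_hball_iff]; simp

lemma add_mem_hball {x y : HierGroup N} {k : ℕ} (hx : x ∈ hball N k) (hy : y ∈ hball N k) :
    x + y ∈ hball N k := by
  rw [mem_hball_iff] at *
  intro i hi
  rcases Finset.mem_union.mp (Finsupp.support_add hi) with h | h
  · exact hx i h
  · exact hy i h

lemma neg_mem_hball {x : HierGroup N} {k : ℕ} (hx : x ∈ hball N k) :
    -x ∈ hball N k := by
  rw [mem_hball_iff] at *
  simpa [Finsupp.support_neg] using hx

lemma hdist_add_right (x y g : HierGroup N) : hdist (x + g) (y + g) = hdist x y := by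
  unfold hdist
  rw [add_sub_add_right_eq_sub]

lemma mem_hball_add_iff {g : HierGroup N} {k : ℕ} (hg : g ∈ hball N k) (x : HierGroup N) :
    x + g ∈ hball N k ↔ x ∈ hball N k := by
  constructor
  · intro h
    have := add_mem_hball h (neg_mem_hball hg)
    simpa using this
  · intro h
    exact add_mem_hball h hg

lemma hball_finite (hN : N ≠ 0) (k : ℕ) : (hball N k).Finite := by
  haveI : NeZero N := ⟨hN⟩
  have hinj : Set.InjOn (fun (y : HierGroup N) (i : Fin k) => y i.1) (hball N k) := by
    intro y hy z hz h
    ext i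
    by_cases hik : i < k
    · exact congrFun h ⟨i, hik⟩
    · have hy0 : y i = 0 := by
        by_contra h0
        exact hik (mem_hball_iff.mp hy i (Finsupp.mem_support_iff.mpr h0))
      have hz0 : z i = 0 := by
        by_contra h0
        exact hik (mem_hball_iff.mp hz i (Finsupp.mem_support_iff.mpr h0))
      rw [hy0, hz0]
  exact Set.Finite.of_finite_image (Set.toFinite _) hinj

lemma hball_ncard_le (hN : N ≠ 0) (k : ℕ) : (hball N k).ncard ≤ N ^ k := by
  haveI : NeZero N := ⟨hN⟩
  have hinj : Set.InjOn (fun (y : HierGroup N) (i : Fin k) => y i.1) (hball N k) := by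
    intro y hy z hz h
    ext i
    by_cases hik : i < k
    · exact congrFun h ⟨i, hik⟩
    · have hy0 : y i = 0 := by
        by_contra h0
        exact hik (mem_hball_iff.mp hy i (Finsupp.mem_support_iff.mpr h0))
      have hz0 : z i = 0 := by
        by_contra h0
        exact hik (mem_hball_iff.mp hz i (Finsupp.mem_support_iff.mpr h0))
      rw [hy0, hz0]
  calc (hball N k).ncard ≤ (Set.univ : Set (Fin k → ZMod N)).ncard :=
        Set.ncard_le_ncard_of_injOn _ (fun a _ => Set.mem_univ _) hinj (Set.toFinite _)
    _ = N ^ k := by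
        rw [Set.ncard_univ, Nat.card_eq_fintype_card, Fintype.card_fun]
        simp [ZMod.card]

lemma restrict_walk_mem {V : Type*} {G : SimpleGraph V} {S : Set V} {x y : V}
    (w : (restrictTo G S).Walk x y) : x = y ∨ (x ∈ S ∧ y ∈ S) := by
  induction w with
  | nil => exact Or.inl rfl
  | cons h p ih =>
    right
    rcases ih with rfl | ⟨h1, h2⟩
    · exact ⟨h.2.1, h.2.2⟩
    · exact ⟨h.2.1, h2⟩

lemma clusterIn_subset {G : SimpleGraph (HierGroup N)} {k : ℕ} {x : HierGroup N}
    (hx : x ∈ hball N k) : clusterIn N G k x ⊆ hball N k := by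
  intro y hy
  obtain ⟨w⟩ := hy
  rcases restrict_walk_mem w with rfl | ⟨_, h2⟩
  · exact hx
  · exact h2

lemma mem_clusterIn_self {G : SimpleGraph (HierGroup N)} {k : ℕ} {x : HierGroup N} :
    x ∈ clusterIn N G k x := SimpleGraph.Reachable.refl x

lemma clusterIn_eq_of_mem {G : SimpleGraph (HierGroup N)} {k : ℕ} {x y : HierGroup N}
    (hy : y ∈ clusterIn N G k x) : clusterIn N G k y = clusterIn N G k x := by
  ext z
  exact ⟨fun hz => (hy : (restrictTo G (hball N k)).Reachable x y).trans hz,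
    fun hz => (hy : (restrictTo G (hball N k)).Reachable x y).symm.trans hz⟩

def restrictHom {V : Type*} (G : SimpleGraph V) (S : Set V) : restrictTo G S →g G :=
  ⟨id, fun h => h.1⟩

lemma reachable_of_mem_clusterIn {G : SimpleGraph (HierGroup N)} {k : ℕ} {x y : HierGroup N}
    (hy : y ∈ clusterIn N G k x) : G.Reachable x y :=
  (hy : (restrictTo G (hball N k)).Reachable x y).map (restrictHom G _)

/-- the graph determined by a fixed edge configuration -/
abbrev Gf {V : Type*} (f : Sym2 V → Bool) : SimpleGraph V := graphOf (fun e (_ : Unit) => f e) ()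

/-- relevant edges for scale `k` -/
def hedges (N k : ℕ) : Set (Sym2 (HierGroup N)) :=
  {e | ¬ e.IsDiag ∧ ∀ z ∈ e, z ∈ hball N k}

lemma hedges_finite (hN : N ≠ 0) (k : ℕ) : (hedges N k).Finite := by
  apply Set.Finite.subset (((hball_finite hN k).prod (hball_finite hN k)).image
    (fun p => s(p.1, p.2)))
  rintro e ⟨hd, hm⟩
  induction e with
  | h x y => exact ⟨(x, y), ⟨hm x (by simp), hm y (by simp)⟩, rfl⟩

lemma mk_mem_hedges_iff {k : ℕ} {x y : HierGroup N} :
    s(x, y) ∈ hedges N k ↔ x ≠ y ∧ x ∈ hball N k ∧ y ∈ hball N k := by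
  unfold hedges
  simp only [Set.mem_setOf_eq, Sym2.isDiag_iff_proj_eq, Sym2.mem_iff]
  constructor
  · rintro ⟨hd, hm⟩
    exact ⟨hd, hm x (Or.inl rfl), hm y (Or.inr rfl)⟩
  · rintro ⟨hd, hx, hy⟩
    refine ⟨hd, ?_⟩
    rintro z (rfl | rfl) <;> assumption

lemma restrict_congr {k : ℕ} {f f' : Sym2 (HierGroup N) → Bool}
    (h : ∀ e ∈ hedges N k, f e = f' e) :
    restrictTo (Gf f) (hball N k) = restrictTo (Gf f') (hball N k) := by
  ext a b
  show ((a ≠ b ∧ f s(a,b) = true) ∧ a ∈ hball N k ∧ b ∈ hball N k) ↔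
    ((a ≠ b ∧ f' s(a,b) = true) ∧ a ∈ hball N k ∧ b ∈ hball N k)
  constructor
  · rintro ⟨⟨hne, hf⟩, ha, hb⟩
    exact ⟨⟨hne, by rw [← h s(a,b) (mk_mem_hedges_iff.mpr ⟨hne, ha, hb⟩)]; exact hf⟩, ha, hb⟩
  · rintro ⟨⟨hne, hf⟩, ha, hb⟩
    exact ⟨⟨hne, by rw [h s(a,b) (mk_mem_hedges_iff.mpr ⟨hne, ha, hb⟩)]; exact hf⟩, ha, hb⟩

lemma clusterIn_congr {G G' : SimpleGraph (HierGroup N)} {k : ℕ} {x : HierGroup N}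
    (h : restrictTo G (hball N k) = restrictTo G' (hball N k)) :
    clusterIn N G k x = clusterIn N G' k x := by
  unfold clusterIn
  rw [h]

/-- translation on edges -/
noncomputable def tauS (g : HierGroup N) : Sym2 (HierGroup N) ≃ Sym2 (HierGroup N) where
  toFun := Sym2.map (· + g)
  invFun := Sym2.map (· + (-g))
  left_inv e := by
    rw [Sym2.map_map]
    have : ((· + (-g)) ∘ (· + g)) = (id : HierGroup N → HierGroup N) := by
      funext z; simp
    rw [this, Sym2.map_id, id_eq]
  right_inv e := by
    rw [Sym2.map_map]
    have : ((· + g) ∘ (· + (-g))) = (id : HierGroup N → HierGroup N) := by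
      funext z; simp
    rw [this, Sym2.map_id, id_eq]

lemma tauS_mk (g x y : HierGroup N) : tauS g s(x, y) = s(x + g, y + g) :=
  Sym2.map_pair_eq _ _ _

lemma tauS_maps_hedges {g : HierGroup N} {k : ℕ} (hg : g ∈ hball N k) :
    ∀ e ∈ hedges N k, tauS g e ∈ hedges N k := by
  intro e he
  induction e with
  | h x y =>
    rw [mk_mem_hedges_iff] at he
    rw [tauS_mk, mk_mem_hedges_iff]
    exact ⟨fun hc => he.1 (by simpa using congrArg (· + (-g)) hc),
      add_mem_hball he.2.1 hg, add_mem_hball he.2.2 hg⟩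

lemma clusterIn_shift {k : ℕ} {g : HierGroup N} (hg : g ∈ hball N k)
    (f : Sym2 (HierGroup N) → Bool) :
    (clusterIn N (Gf f) k g).ncard
      = (clusterIn N (Gf (fun e => f (tauS g e))) k 0).ncard := by
  set f' : Sym2 (HierGroup N) → Bool := fun e => f (tauS g e) with hf'
  have hAdj : ∀ a b : HierGroup N,
      (restrictTo (Gf f') (hball N k)).Adj a b ↔
      (restrictTo (Gf f) (hball N k)).Adj (a + g) (b + g) := by
    intro a b
    show ((a ≠ b ∧ f' s(a,b) = true) ∧ a ∈ hball N k ∧ b ∈ hball N k) ↔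
      ((a + g ≠ b + g ∧ f s(a+g,b+g) = true) ∧ a + g ∈ hball N k ∧ b + g ∈ hball N k)
    rw [hf']
    simp only [tauS_mk]
    constructor
    · rintro ⟨⟨hne, hf⟩, ha, hb⟩
      exact ⟨⟨fun hc => hne (by simpa using congrArg (· + (-g)) hc), hf⟩,
        (mem_hball_add_iff hg a).mpr ha, (mem_hball_add_iff hg b).mpr hb⟩
    · rintro ⟨⟨hne, hf⟩, ha, hb⟩
      exact ⟨⟨fun hc => hne (congrArg (· + g) hc), hf⟩,
        (mem_hball_add_iff hg a).mp ha, (mem_hball_add_iff hg b).mp hb⟩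
  have hreach1 : ∀ a b : HierGroup N, (restrictTo (Gf f') (hball N k)).Reachable a b →
      (restrictTo (Gf f) (hball N k)).Reachable (a + g) (b + g) := fun a b h =>
    h.map ⟨fun z => z + g, fun {u v} hh => (hAdj u v).mp hh⟩
  have hreach2 : ∀ a b : HierGroup N, (restrictTo (Gf f) (hball N k)).Reachable a b →
      (restrictTo (Gf f') (hball N k)).Reachable (a + -g) (b + -g) := fun a b h =>
    h.map ⟨fun z => z + -g, fun {u v} hh => by
      have := (hAdj (u + -g) (v + -g)).mpr
      simp only [neg_add_cancel_right] at this
      exact this hh⟩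
  have hiff : ∀ y : HierGroup N,
      y ∈ clusterIn N (Gf f') k 0 ↔ y + g ∈ clusterIn N (Gf f) k g := by
    intro y
    constructor
    · intro h
      have := hreach1 0 y h
      simpa [clusterIn] using this
    · intro h
      have := hreach2 g (y + g) h
      simpa [clusterIn] using this
  have himg : clusterIn N (Gf f) k g = (· + g) '' clusterIn N (Gf f') k 0 := by
    ext z
    rw [Set.mem_image]
    constructor
    · intro hz
      refine ⟨z + (-g), ?_, by simp⟩
      rw [hiff (z + -g)]
      simpa using hz
    · rintro ⟨w, hw, rfl⟩
      exact (hiff w).mp hw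
  rw [himg, Set.ncard_image_of_injective _ (add_left_injective g)]

section Decomp
open scoped Classical
variable {ι : Type*} {Ω : Type*} [MeasurableSpace Ω] {μ : Measure Ω} {E : ι → Ω → Bool}

/-- extend a boolean vector on `s` by `false` -/
noncomputable def pad (s : Finset ι) (b : {e // e ∈ s} → Bool) : ι → Bool :=
  fun e => if he : e ∈ s then b ⟨e, he⟩ else false

lemma pad_eq {s : Finset ι} {b : {e // e ∈ s} → Bool} {e : ι} (he : e ∈ s) :
    pad s b e = b ⟨e, he⟩ := dif_pos he

lemma event_decomp (s : Finset ι) (P : (ι → Bool) → Prop)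
    (hP : ∀ f f', (∀ e ∈ s, f e = f' e) → P f → P f')
    (h : Ω → ι → Bool) :
    {ω | P (h ω)} = ⋃ b ∈ Finset.univ.filter (fun b : {e // e ∈ s} → Bool => P (pad s b)),
      ⋂ e ∈ s, {ω | h ω e = pad s b e} := by
  ext ω
  simp only [Set.mem_setOf_eq, Set.mem_iUnion, Finset.mem_filter, Finset.mem_univ, true_and,
    Set.mem_iInter, exists_prop]
  constructor
  · intro hp
    refine ⟨fun e => h ω e.1, hP _ _ (fun e he => (pad_eq (b := fun e => h ω e.1) he).symm) hp,
      fun e he => (pad_eq (b := fun e => h ω e.1) he).symm⟩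
  · rintro ⟨b, hPb, hb⟩
    exact hP (pad s b) (h ω) (fun e he => (hb e he).symm) hPb

lemma cells_disjoint (s : Finset ι) (h : Ω → ι → Bool) (t : Finset ({e // e ∈ s} → Bool)) :
    Set.PairwiseDisjoint (↑t) (fun b => ⋂ e ∈ s, {ω | h ω e = pad s b e}) := by
  intro b _ b' _ hne
  rw [Function.onFun, Set.disjoint_left]
  intro ω hω hω'
  apply hne
  funext e
  have h1 := Set.mem_iInter₂.mp hω e.1 e.2
  have h2 := Set.mem_iInter₂.mp hω' e.1 e.2
  rw [Set.mem_setOf_eq, pad_eq e.2] at h1 h2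
  rw [← h1, ← h2]

lemma meas_cell_set (hE : ∀ e, Measurable (E e)) (e : ι) (c : Bool) :
    MeasurableSet {ω | E e ω = c} := hE e (measurableSet_singleton c)

lemma event_measurableSet (hE : ∀ e, Measurable (E e)) (s : Finset ι)
    (P : (ι → Bool) → Prop)
    (hP : ∀ f f', (∀ e ∈ s, f e = f' e) → P f → P f') :
    MeasurableSet {ω | P (fun e => E e ω)} := by
  rw [event_decomp s P hP (fun ω e => E e ω)]
  refine MeasurableSet.biUnion (Finset.countable_toSet _) fun b _ => ?_
  exact MeasurableSet.biInter (Finset.countable_toSet _) fun e _ => meas_cell_set hE e _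

lemma cell_measure (hind : iIndepFun E μ) (s : Finset ι)
    (g : ι → Bool) :
    μ (⋂ e ∈ s, {ω | E e ω = g e}) = ∏ e ∈ s, μ {ω | E e ω = g e} :=
  hind.meas_biInter fun e _ => ⟨{g e}, trivial, rfl⟩

lemma event_measure_eq (hE : ∀ e, Measurable (E e))
    (hind : iIndepFun E μ)
    (s : Finset ι) (τ : ι ≃ ι) (hτ : ∀ e ∈ s, τ e ∈ s)
    (hmarg : ∀ e ∈ s, ∀ t : Bool, μ {ω | E (τ e) ω = t} = μ {ω | E e ω = t})
    (P : (ι → Bool) → Prop)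
    (hP : ∀ f f', (∀ e ∈ s, f e = f' e) → P f → P f') :
    μ {ω | P (fun e => E (τ e) ω)} = μ {ω | P (fun e => E e ω)} := by
  have himg : s.image τ = s := by
    apply Finset.eq_of_subset_of_card_le
    · intro e he
      obtain ⟨a, ha, rfl⟩ := Finset.mem_image.mp he
      exact hτ a ha
    · rw [Finset.card_image_of_injective _ τ.injective]
  rw [event_decomp s P hP (fun ω e => E (τ e) ω), event_decomp s P hP (fun ω e => E e ω)]
  rw [measure_biUnion_finset (cells_disjoint s _ _)
    (fun b _ => MeasurableSet.biInter (Finset.countable_toSet _)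
      fun e _ => meas_cell_set hE _ _),
    measure_biUnion_finset (cells_disjoint s _ _)
    (fun b _ => MeasurableSet.biInter (Finset.countable_toSet _)
      fun e _ => meas_cell_set hE _ _)]
  refine Finset.sum_congr rfl fun b _ => ?_
  have hset : (⋂ e ∈ s, {ω | E (τ e) ω = pad s b e})
      = ⋂ e ∈ s.image τ, {ω | E e ω = pad s b (τ.symm e)} := by
    ext ω
    simp only [Set.mem_iInter, Finset.mem_image]
    constructor
    · rintro H e ⟨a, ha, rfl⟩
      rw [Equiv.symm_apply_apply]
      exact H a ha
    · intro H e he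
      have := H (τ e) ⟨e, he, rfl⟩
      rwa [Equiv.symm_apply_apply] at this
  rw [hset, cell_measure hind, cell_measure hind,
    Finset.prod_image (fun a _ b _ h => τ.injective h)]
  refine Finset.prod_congr rfl fun e he => ?_
  rw [Equiv.symm_apply_apply]
  exact hmarg e he _

lemma marg_bool [IsProbabilityMeasure μ] (hE : ∀ e, Measurable (E e)) {a a' : ι}
    (h : μ {ω | E a ω = true} = μ {ω | E a' ω = true}) :
    ∀ t : Bool, μ {ω | E a ω = t} = μ {ω | E a' ω = t} := by
  intro t
  cases t
  · have h1 : {ω | E a ω = false} = {ω | E a ω = true}ᶜ := by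
      ext ω; simp
    have h2 : {ω | E a' ω = false} = {ω | E a' ω = true}ᶜ := by
      ext ω; simp
    rw [h1, h2, measure_compl (meas_cell_set hE a true) (measure_ne_top μ _),
      measure_compl (meas_cell_set hE a' true) (measure_ne_top μ _), h]
  · exact h

end Decomp

/-- The key single-scale bound. -/
lemma scale_bound {N : ℕ} (hN : 2 ≤ N) {Ω : Type} [MeasurableSpace Ω] (μ : Measure Ω)
    [IsProbabilityMeasure μ] (E : Sym2 (HierGroup N) → Ω → Bool)
    (hE : ∀ e, Measurable (E e))
    (hind : iIndepFun E μ)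
    (c : ℕ → ℝ) (hprob : EdgeProbOK N 1 c μ E)
    {β : ℝ} (hβ : 0 < β) (k : ℕ) (G : Set Ω)
    (hGsub : ∀ ω ∈ G, ∃ S, IsLargestCluster N (graphOf E ω) k S ∧
      β * (N : ℝ) ^ k ≤ (S.ncard : ℝ)) :
    ENNReal.ofReal β * μ G ≤
      μ {ω | β * (N : ℝ) ^ k ≤ ((clusterIn N (graphOf E ω) k 0).ncard : ℝ)} := by
  have hN0 : N ≠ 0 := by omega
  set P : HierGroup N → (Sym2 (HierGroup N) → Bool) → Prop :=
    fun x f => β * (N : ℝ) ^ k ≤ ((clusterIn N (Gf f) k x).ncard : ℝ) with hPdef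
  set sE : Finset (Sym2 (HierGroup N)) := (hedges_finite hN0 k).toFinset with hsE
  have hPdep : ∀ x : HierGroup N, ∀ f f', (∀ e ∈ sE, f e = f' e) → P x f → P x f' := by
    intro x f f' hagree hp
    have : clusterIn N (Gf f') k x = clusterIn N (Gf f) k x :=
      clusterIn_congr (restrict_congr fun e he =>
        (hagree e ((hedges_finite hN0 k).mem_toFinset.mpr he)).symm)
    show β * (N : ℝ) ^ k ≤ ((clusterIn N (Gf f') k x).ncard : ℝ)
    rw [this]
    exact hp
  set A : HierGroup N → Set Ω := fun x => {ω | P x (fun e => E e ω)} with hA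
  have hgraph : ∀ ω : Ω, graphOf E ω = Gf (fun e => E e ω) := fun ω => rfl
  have hAmeas : ∀ x, MeasurableSet (A x) := fun x =>
    event_measurableSet hE sE (P x) (hPdep x)
  -- translation invariance
  have hAinv : ∀ g ∈ hball N k, μ (A g) = μ (A 0) := by
    intro g hg
    have hset : A g = {ω | P 0 (fun e => E (tauS g e) ω)} := by
      ext ω
      rw [hA]
      simp only [Set.mem_setOf_eq, hPdef]
      rw [clusterIn_shift hg (fun e => E e ω)]
    rw [hset]
    refine event_measure_eq hE hind sE (tauS g) ?_ ?_ (P 0) (hPdep 0)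
    · intro e he
      exact (hedges_finite hN0 k).mem_toFinset.mpr
        (tauS_maps_hedges hg e ((hedges_finite hN0 k).mem_toFinset.mp he))
    · intro e he
      apply marg_bool hE
      have he' := (hedges_finite hN0 k).mem_toFinset.mp he
      induction e with
      | h x y =>
        rw [mk_mem_hedges_iff] at he'
        rw [tauS_mk]
        have hne' : x + g ≠ y + g := fun hc => he'.1 (by simpa using congrArg (· + (-g)) hc)
        rw [hprob (x + g) (y + g) hne', hprob x y he'.1, hdist_add_right]
  -- counting
  set F : Finset (HierGroup N) := (hball_finite hN0 k).toFinset with hF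
  set ε : ENNReal := ENNReal.ofReal (β * (N : ℝ) ^ k) with hε
  set f : Ω → ENNReal := fun ω => ∑ x ∈ F, (A x).indicator (1 : Ω → ENNReal) ω with hfd
  have hfmeas : Measurable f := by
    apply Finset.measurable_sum
    intro x _
    exact measurable_one.indicator (hAmeas x)
  have hGH : G ⊆ {ω | ε ≤ f ω} := by
    intro ω hω
    obtain ⟨S, hS, hcard⟩ := hGsub ω hω
    obtain ⟨⟨x₀, hx₀, hSeq⟩, -⟩ := hS
    have hCsub : S ⊆ hball N k := hSeq ▸ clusterIn_subset hx₀
    have hCfin : S.Finite := (hball_finite hN0 k).subset hCsub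
    have hmem : ∀ y ∈ S, ω ∈ A y := by
      intro y hy
      show β * (N : ℝ) ^ k ≤ (((clusterIn N (Gf fun e => E e ω) k y).ncard : ℕ) : ℝ)
      rw [← hgraph ω, clusterIn_eq_of_mem (hSeq ▸ hy), ← hSeq]
      exact hcard
    have h1 : ε ≤ (S.ncard : ENNReal) := by
      rw [hε, ← ENNReal.ofReal_natCast]
      exact ENNReal.ofReal_le_ofReal hcard
    refine le_trans h1 ?_
    have h2 : (S.ncard : ENNReal) = ∑ x ∈ hCfin.toFinset, (A x).indicator
        (1 : Ω → ENNReal) ω := by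
      rw [Set.ncard_eq_toFinset_card _ hCfin]
      rw [Finset.card_eq_sum_ones, Nat.cast_sum]
      refine Finset.sum_congr rfl fun y hy => ?_
      rw [Set.indicator_of_mem (hmem y (hCfin.mem_toFinset.mp hy))]
      simp
    rw [h2]
    apply Finset.sum_le_sum_of_subset
    intro y hy
    exact (hball_finite hN0 k).mem_toFinset.mpr (hCsub (hCfin.mem_toFinset.mp hy))
  have hlint : ∫⁻ ω, f ω ∂μ = ∑ x ∈ F, μ (A x) := by
    rw [hfd]
    rw [lintegral_finset_sum _ fun x _ => measurable_one.indicator (hAmeas x)]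
    refine Finset.sum_congr rfl fun x _ => ?_
    rw [lintegral_indicator_one (hAmeas x)]
  have hsum : ∑ x ∈ F, μ (A x) = F.card * μ (A 0) := by
    rw [Finset.sum_congr rfl fun x hx => hAinv x ((hball_finite hN0 k).mem_toFinset.mp hx)]
    rw [Finset.sum_const, nsmul_eq_mul]
  have hchain : ε * μ G ≤ (N ^ k : ℕ) * μ (A 0) := by
    calc ε * μ G ≤ ε * μ {ω | ε ≤ f ω} := by
          exact mul_le_mul_right (measure_mono hGH) ε
      _ ≤ ∫⁻ ω, f ω ∂μ := mul_meas_ge_le_lintegral hfmeas ε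
      _ = F.card * μ (A 0) := by rw [hlint, hsum]
      _ ≤ (N ^ k : ℕ) * μ (A 0) := by
          apply mul_le_mul_left
          have : F.card ≤ N ^ k := by
            rw [hF, ← Set.ncard_eq_toFinset_card _ (hball_finite hN0 k)]
            exact hball_ncard_le hN0 k
          exact_mod_cast Nat.cast_le.mpr this
  -- cancel N^k
  have hNk0 : ((N ^ k : ℕ) : ENNReal) ≠ 0 := by
    simp [hN0]
  have hNktop : ((N ^ k : ℕ) : ENNReal) ≠ ⊤ := by simp
  have hεeq : ε = ((N ^ k : ℕ) : ENNReal) * ENNReal.ofReal β := by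
    rw [hε, mul_comm β, ENNReal.ofReal_mul (by positivity)]
    congr 1
    rw [← ENNReal.ofReal_natCast]
    congr 1
    push_cast
    ring
  have : ((N ^ k : ℕ) : ENNReal) * (ENNReal.ofReal β * μ G)
      ≤ ((N ^ k : ℕ) : ENNReal) * μ (A 0) := by
    rw [← mul_assoc, ← hεeq]
    exact hchain
  exact (ENNReal.mul_le_mul_iff_right hNk0 hNktop).mp this

end PercAux

/-- Critical case `δ = 1`, `k_n = ⌊K n log n⌋`: if with positive probability
`p₊`, for all `n ≥ n₀` the largest cluster `X_{k_n}` of the ball `B_{k_n}`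
containing `0` has at least `β N^{k_n}` points, then percolation occurs. -/
theorem percolation_of_eventually_good_balls
    (N : ℕ) (hN : 2 ≤ N) (K : ℝ) (hKpos : 0 < K)
    (c : ℕ → ℝ) (hc0 : ∀ k : ℕ, 1 ≤ k → 0 ≤ c k)
    (Ω : Type) [MeasurableSpace Ω] (μ : Measure Ω) [IsProbabilityMeasure μ]
    (E : Sym2 (HierGroup N) → Ω → Bool)
    (hE : ∀ e, Measurable (E e))
    (hind : iIndepFun E μ)
    (hprob : EdgeProbOK N 1 c μ E)
    (β : ℝ) (hβ : 0 < β) (n0 : ℕ) (pstar : ENNReal) (hpstar : 0 < pstar)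
    (hgood : μ {ω | ∀ n : ℕ, n0 ≤ n →
        ∃ S : Set (HierGroup N), IsLargestCluster N (graphOf E ω) (kseq K n) S ∧
          β * (N : ℝ) ^ (kseq K n) ≤ (S.ncard : ℝ)} = pstar) :
    0 < μ {ω | InInfiniteCluster (graphOf E ω) 0} := by
  classical
  have hN0 : N ≠ 0 := by omega
  set Good : Set Ω := {ω | ∀ n : ℕ, n0 ≤ n →
      ∃ S : Set (HierGroup N), IsLargestCluster N (graphOf E ω) (kseq K n) S ∧
        β * (N : ℝ) ^ (kseq K n) ≤ (S.ncard : ℝ)} with hGood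
  -- the per-scale events for the cluster of 0
  set A0 : ℕ → Set Ω := fun k =>
    {ω | β * (N : ℝ) ^ k ≤ ((clusterIn N (graphOf E ω) k 0).ncard : ℝ)} with hA0
  have hA0meas : ∀ k, MeasurableSet (A0 k) := by
    intro k
    have hPdep : ∀ f f' : Sym2 (HierGroup N) → Bool,
        (∀ e ∈ (PercAux.hedges_finite hN0 k).toFinset, f e = f' e) →
        (β * (N : ℝ) ^ k ≤ ((clusterIn N (PercAux.Gf f) k 0).ncard : ℝ)) →
        (β * (N : ℝ) ^ k ≤ ((clusterIn N (PercAux.Gf f') k 0).ncard : ℝ)) := by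
      intro f f' hagree hp
      have : clusterIn N (PercAux.Gf f') k 0 = clusterIn N (PercAux.Gf f) k 0 :=
        PercAux.clusterIn_congr (PercAux.restrict_congr fun e he =>
          (hagree e ((PercAux.hedges_finite hN0 k).mem_toFinset.mpr he)).symm)
      rw [this]
      exact hp
    exact PercAux.event_measurableSet hE (PercAux.hedges_finite hN0 k).toFinset
      (fun f => β * (N : ℝ) ^ k ≤ ((clusterIn N (PercAux.Gf f) k 0).ncard : ℝ)) hPdep
  -- lower bound at every scale kseq K n, n ≥ n0
  have hbound : ∀ n, n0 ≤ n → ENNReal.ofReal β * pstar ≤ μ (A0 (kseq K n)) := by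
    intro n hn
    rw [← hgood]
    exact PercAux.scale_bound hN μ E hE hind c hprob hβ (kseq K n) Good
      (fun ω hω => hω n hn)
  -- tendsto
  have hkt : Tendsto (kseq K) atTop atTop := by
    have h1 : Tendsto (fun n : ℕ => K * n) atTop atTop :=
      (tendsto_natCast_atTop_atTop).const_mul_atTop hKpos
    have h2 : Tendsto (fun n : ℕ => K * n * Real.log n) atTop atTop := by
      apply tendsto_atTop_mono' atTop _ h1
      filter_upwards [eventually_ge_atTop 3] with n hn
      have hn3 : (3 : ℝ) ≤ n := by exact_mod_cast hn
      have hlog : 1 ≤ Real.log n := by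
        rw [Real.le_log_iff_exp_le (by linarith)]
        calc Real.exp 1 ≤ 2.7182818286 := Real.exp_one_lt_d9.le
          _ ≤ 3 := by norm_num
          _ ≤ n := hn3
      have hKn : 0 ≤ K * (n : ℝ) := by positivity
      calc K * (n : ℝ) = K * n * 1 := by ring
        _ ≤ K * n * Real.log n := mul_le_mul_of_nonneg_left hlog hKn
    exact tendsto_nat_floor_atTop.comp h2
  have hgrow : Tendsto (fun m : ℕ => β * (N : ℝ) ^ (kseq K m)) atTop atTop := by
    apply Tendsto.const_mul_atTop hβ
    exact (tendsto_pow_atTop_atTop_of_one_lt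
      (by exact_mod_cast hN.trans_lt' one_lt_two : (1 : ℝ) < N)).comp hkt
  -- tail events
  set T : ℕ → Set Ω := fun n => ⋃ m, ⋃ (_ : n ≤ m ∧ n0 ≤ m), A0 (kseq K m) with hT
  have hTmeas : ∀ n, MeasurableSet (T n) := fun n =>
    MeasurableSet.iUnion fun m => MeasurableSet.iUnion fun _ => hA0meas _
  have hTanti : Antitone T := by
    intro a b hab
    refine Set.iUnion₂_subset fun m hm => ?_
    exact Set.subset_iUnion₂ (s := fun m _ => A0 (kseq K m)) m ⟨hab.trans hm.1, hm.2⟩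
  have hTlb : ∀ n, ENNReal.ofReal β * pstar ≤ μ (T n) := by
    intro n
    refine le_trans (hbound (max n n0) (le_max_right n n0)) (measure_mono ?_)
    exact Set.subset_iUnion₂ (s := fun m _ => A0 (kseq K m)) (max n n0)
      ⟨le_max_left n n0, le_max_right n n0⟩
  have hInter : μ (⋂ n, T n) = ⨅ n, μ (T n) :=
    Antitone.measure_iInter hTanti (fun n => (hTmeas n).nullMeasurableSet)
      ⟨0, measure_ne_top μ _⟩
  have hbp : 0 < ENNReal.ofReal β * pstar :=
    ENNReal.mul_pos (ENNReal.ofReal_pos.mpr hβ).ne' hpstar.ne'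
  have hpos : 0 < μ (⋂ n, T n) := by
    rw [hInter]
    exact lt_of_lt_of_le hbp (le_iInf hTlb)
  have hsub : (⋂ n, T n) ⊆ {ω | InInfiniteCluster (graphOf E ω) 0} := by
    intro ω hω
    show Set.Infinite _
    by_contra hfin
    rw [Set.not_infinite] at hfin
    set Cl : Set (HierGroup N) := {y | (graphOf E ω).Reachable 0 y} with hCl
    obtain ⟨n, hn⟩ := (hgrow.eventually_gt_atTop (Cl.ncard : ℝ)).exists_forall_of_atTop
    have hTn := Set.mem_iInter.mp hω n
    rw [hT] at hTn
    simp only [Set.mem_iUnion] at hTn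
    obtain ⟨m, ⟨hm1, hm2⟩, hA⟩ := hTn
    have hAm : β * (N : ℝ) ^ (kseq K m) ≤
        ((clusterIn N (graphOf E ω) (kseq K m) 0).ncard : ℝ) := hA
    have hsubCl : clusterIn N (graphOf E ω) (kseq K m) 0 ⊆ Cl := fun y hy =>
      PercAux.reachable_of_mem_clusterIn hy
    have hle : (clusterIn N (graphOf E ω) (kseq K m) 0).ncard ≤ Cl.ncard :=
      Set.ncard_le_ncard hsubCl hfin
    have hlt := hn m hm1
    have : ((clusterIn N (graphOf E ω) (kseq K m) 0).ncard : ℝ) ≤ (Cl.ncard : ℝ) := by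
      exact_mod_cast hle
    linarith
  exact lt_of_lt_of_le hpos (measure_mono hsub)
end
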